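/- (Alignment term bound under imperfect relaxed alignment.) Suppose there exist β ≥ 0 and a measurable set B ⊆ Z such that p_T^φ is absolutely continuous with respect to p_S^φ on B with dp_T^φ/dp_S^φ(z) ≤ 1+β for all z ∈ B, and p_T^φ(B) ≥ 1−δ_1. Then for any classifier h : Z → {0,1}, ∫_Z r_S(z; φ,h) (dp_T^φ − dp_S^φ)(z) ≤ β E_S(φ,h) + δ_1. -/

import Mathlib

open MeasureTheory
open scoped ENNReal

private lemma int_of_bdd {α : Type*} [MeasurableSpace α] (μ : Measure α) [IsFiniteMeasure μ]
    {u : α → ℝ} (hu : Measurable u) (hb : ∀ x, |u x| ≤ 1) : Integrable u μ := by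
  refine (integrable_const (1:ℝ)).mono' hu.aestronglyMeasurable ?_
  filter_upwards with x
  simpa using hb x

/-- **alignment term bound under imperfect relaxed alignment.** If there are
`β ≥ 0` and a measurable `B ⊆ Z` on which the density ratio of `pT.map φ` w.r.t. `pS.map φ`
is at most `1+β`, with `pT.map φ B ≥ 1 − δ1`, then
`∫ r_S d(pT.map φ) − ∫ r_S d(pS.map φ) ≤ β·E_S(φ,h) + δ1`, where `r_S(z) = |h z − g z|`
with `g = f_S^φ` a version of the conditional expectation of `f` given `φ`. -/
theorem alignment_term_le_of_imperfect_relaxed_alignment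
    {X Z : Type*} [MeasurableSpace X] [MeasurableSpace Z]
    (pS pT : Measure X) [IsProbabilityMeasure pS] [IsProbabilityMeasure pT]
    (φ : X → Z) (hφ : Measurable φ)
    (f : X → ℝ) (hf : Measurable f) (hf01 : ∀ x, f x = 0 ∨ f x = 1)
    (h : Z → ℝ) (hh : Measurable h) (hh01 : ∀ z, h z = 0 ∨ h z = 1)
    (g : Z → ℝ) (hg : Measurable g) (hg01 : ∀ z, g z ∈ Set.Icc (0 : ℝ) 1)
    (hcond : pS[f | MeasurableSpace.comap φ inferInstance] =ᵐ[pS] fun x => g (φ x))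
    (β δ1 : ℝ) (hβ : 0 ≤ β)
    (B : Set Z) (hB : MeasurableSet B)
    (hratio : (pT.map φ).restrict B ≤ ENNReal.ofReal (1 + β) • (pS.map φ).restrict B)
    (hBmass : ENNReal.ofReal (1 - δ1) ≤ pT.map φ B) :
    (∫ z, |h z - g z| ∂(pT.map φ)) - ∫ z, |h z - g z| ∂(pS.map φ) ≤
      β * (∫ x, |h (φ x) - f x| ∂pS) + δ1 := by
  set μS := pS.map φ with hμS
  set μT := pT.map φ with hμT
  haveI : IsProbabilityMeasure μS := Measure.isProbabilityMeasure_map hφ.aemeasurable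
  haveI : IsProbabilityMeasure μT := Measure.isProbabilityMeasure_map hφ.aemeasurable
  set r : Z → ℝ := fun z => |h z - g z| with hr_def
  have hr_meas : Measurable r := (hh.sub hg).abs
  have hr0 : ∀ z, 0 ≤ r z := fun z => abs_nonneg _
  have hr1 : ∀ z, r z ≤ 1 := by
    intro z
    have hgz := hg01 z
    rcases hh01 z with e | e <;> rw [hr_def] <;> simp only [e] <;> rw [abs_le] <;>
      constructor <;> linarith [hgz.1, hgz.2]
  have hrabs : ∀ z, |r z| ≤ 1 := by
    intro z; rw [abs_of_nonneg (hr0 z)]; exact hr1 z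
  have hr_intS : Integrable r μS := int_of_bdd μS hr_meas hrabs
  have hr_intT : Integrable r μT := int_of_bdd μT hr_meas hrabs
  -- Step A: ∫ r ∂μS = ∫ |h∘φ - f| ∂pS
  have hm : MeasurableSpace.comap φ inferInstance ≤ (inferInstance : MeasurableSpace X) :=
    hφ.comap_le
  haveI : SigmaFinite (pS.trim hm) := by
    haveI : IsFiniteMeasure (pS.trim hm) := isFiniteMeasure_trim hm
    infer_instance
  have hf_int : Integrable f pS := by
    refine int_of_bdd pS hf ?_
    intro x; rcases hf01 x with e | e <;> simp [e]
  have key : ∀ s : Set X, MeasurableSet[MeasurableSpace.comap φ inferInstance] s →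
      ∫ x in s, g (φ x) ∂pS = ∫ x in s, f x ∂pS := by
    intro s hs
    calc ∫ x in s, g (φ x) ∂pS
        = ∫ x in s, (pS[f | MeasurableSpace.comap φ inferInstance]) x ∂pS := by
          exact setIntegral_congr_ae (hm s hs)
            (hcond.symm.mono fun x hx _ => hx)
      _ = ∫ x in s, f x ∂pS := setIntegral_condExp hm hf_int hs
  set A : Set X := φ ⁻¹' (h ⁻¹' {1}) with hA_def
  have hA_comap : MeasurableSet[MeasurableSpace.comap φ inferInstance] A :=
    ⟨h ⁻¹' {1}, hh (measurableSet_singleton 1), rfl⟩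
  have hA : MeasurableSet A := hm _ hA_comap
  have hhφ_int : Integrable (fun x => h (φ x)) pS := by
    refine int_of_bdd pS (hh.comp hφ) ?_
    intro x; rcases hh01 (φ x) with e | e <;> simp [e]
  have hgφ_int : Integrable (fun x => g (φ x)) pS := by
    refine int_of_bdd pS (hg.comp hφ) ?_
    intro x
    have := hg01 (φ x); rw [abs_le]; constructor <;> linarith [this.1, this.2]
  -- pointwise formulas
  have hfpt : ∀ x, |h (φ x) - f x| = h (φ x) + f x - 2 * A.indicator f x := by
    intro x
    rcases hh01 (φ x) with e | e
    · have hxA : x ∉ A := by simp [hA_def, e]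
      rw [Set.indicator_of_notMem hxA, e]
      rcases hf01 x with e' | e' <;> rw [e'] <;> norm_num
    · have hxA : x ∈ A := by simp [hA_def, e]
      rw [Set.indicator_of_mem hxA, e]
      rcases hf01 x with e' | e' <;> rw [e'] <;> norm_num
  have hgpt : ∀ x, |h (φ x) - g (φ x)| = h (φ x) + g (φ x) - 2 * A.indicator (fun y => g (φ y)) x := by
    intro x
    have hgz := hg01 (φ x)
    rcases hh01 (φ x) with e | e
    · have hxA : x ∉ A := by simp [hA_def, e]
      rw [Set.indicator_of_notMem hxA, e]
      rw [abs_of_nonpos (by linarith [hgz.1])]; ring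
    · have hxA : x ∈ A := by simp [hA_def, e]
      rw [Set.indicator_of_mem hxA, e]
      rw [abs_of_nonneg (by linarith [hgz.2])]; ring
  have hindf_int : Integrable (A.indicator f) pS := hf_int.indicator hA
  have hindg_int : Integrable (A.indicator (fun y => g (φ y))) pS := hgφ_int.indicator hA
  have hEf : ∫ x, |h (φ x) - f x| ∂pS
      = (∫ x, h (φ x) ∂pS) + (∫ x, f x ∂pS) - 2 * ∫ x in A, f x ∂pS := by
    have hadd : Integrable (fun x => h (φ x) + f x) pS := hhφ_int.add hf_int
    rw [show (fun x => |h (φ x) - f x|) = fun x => (h (φ x) + f x) - 2 * A.indicator f x from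
      funext hfpt]
    rw [integral_sub hadd (hindf_int.const_mul 2), integral_add hhφ_int hf_int,
      integral_const_mul, integral_indicator hA]
  have hEg : ∫ x, |h (φ x) - g (φ x)| ∂pS
      = (∫ x, h (φ x) ∂pS) + (∫ x, g (φ x) ∂pS) - 2 * ∫ x in A, g (φ x) ∂pS := by
    have hadd : Integrable (fun x => h (φ x) + g (φ x)) pS := hhφ_int.add hgφ_int
    rw [show (fun x => |h (φ x) - g (φ x)|)
        = fun x => (h (φ x) + g (φ x)) - 2 * A.indicator (fun y => g (φ y)) x from funext hgpt]
    rw [integral_sub hadd (hindg_int.const_mul 2), integral_add hhφ_int hgφ_int,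
      integral_const_mul, integral_indicator hA]
  have huniv : ∫ x, g (φ x) ∂pS = ∫ x, f x ∂pS := by
    have := key Set.univ MeasurableSet.univ
    simpa [setIntegral_univ] using this
  have hEq : ∫ z, r z ∂μS = ∫ x, |h (φ x) - f x| ∂pS := by
    rw [hμS, integral_map hφ.aemeasurable hr_meas.aestronglyMeasurable]
    simp only [hr_def]
    rw [hEg, hEf, huniv, key A hA_comap]
  -- Step B: inequality
  have hδ1 : 0 ≤ δ1 := by
    have h1 : ENNReal.ofReal (1 - δ1) ≤ 1 := hBmass.trans prob_le_one
    have := ENNReal.ofReal_le_one.mp h1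
    linarith
  have hBfin : μT B ≠ ⊤ := (measure_lt_top μT B).ne
  have hBto : 1 - δ1 ≤ (μT B).toReal :=
    (ENNReal.ofReal_le_iff_le_toReal hBfin).mp hBmass
  have h1 : ∫ z in B, r z ∂μT ≤ (1 + β) * ∫ z in B, r z ∂μS := by
    have hle : ∫ z in B, r z ∂μT ≤ ∫ z, r z ∂(ENNReal.ofReal (1 + β) • μS.restrict B) := by
      refine integral_mono_measure hratio ?_ ?_
      · filter_upwards with z using hr0 z
      · exact (hr_intS.restrict).smul_measure ENNReal.ofReal_ne_top
    rwa [integral_smul_measure, ENNReal.toReal_ofReal (by linarith)] at hle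
  have h2 : ∫ z in B, r z ∂μS ≤ ∫ z, r z ∂μS :=
    setIntegral_le_integral hr_intS (Filter.Eventually.of_forall hr0)
  have h3 : ∫ z in Bᶜ, r z ∂μT ≤ (μT Bᶜ).toReal := by
    calc ∫ z in Bᶜ, r z ∂μT ≤ ∫ _ in Bᶜ, (1 : ℝ) ∂μT := by
          refine setIntegral_mono hr_intT.restrict (integrable_const 1) hr1
      _ = (μT Bᶜ).toReal := by simp; rfl
  have h4 : (μT Bᶜ).toReal ≤ δ1 := by
    have hc : μT Bᶜ = 1 - μT B := by
      rw [measure_compl hB hBfin, measure_univ]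
    rw [hc, ENNReal.toReal_sub_of_le prob_le_one ENNReal.one_ne_top, ENNReal.toReal_one]
    linarith
  have hsplit : ∫ z, r z ∂μT = (∫ z in B, r z ∂μT) + ∫ z in Bᶜ, r z ∂μT :=
    (integral_add_compl hB hr_intT).symm
  have hSnn : 0 ≤ ∫ z, r z ∂μS := integral_nonneg hr0
  have hfinal : ∫ z, r z ∂μT - ∫ z, r z ∂μS ≤ β * (∫ z, r z ∂μS) + δ1 := by
    have := mul_le_mul_of_nonneg_left h2 (by linarith : (0:ℝ) ≤ 1 + β)
    linarith
  show (∫ z, r z ∂μT) - ∫ z, r z ∂μS ≤ β * (∫ x, |h (φ x) - f x| ∂pS) + δ1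
  rw [← hEq]
  linarith [hfinal]
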